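/- Let F_n be the free group on generators a_1,...,a_n with its Cayley graph (a tree), and for x ∈ F_n let γ_x be the unique geodesic from e to x. Define A : ℂ^{E(F_n)} → ℂ^{F_n} by (Af)(x) = Σ_{j=1}^{|x|} f(γ_x(j-1), γ_x(j)). Then δ(Af) = f for all f, A maps each basis edge function E_{(x,xa_j)} into ℓ^∞(F_n), and consequently ker(∂) ∩ ℓ¹(E(F_n)) = {0}. -/

import Mathlib

open scoped Classical

noncomputable section

/-- The `j`-th vertex of the unique geodesic in the Cayley tree of the free group from the
identity to `x` (the prefix of length `j` of the reduced word of `x`). -/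
def geodesicAt {n : ℕ} (x : FreeGroup (Fin n)) (j : ℕ) : FreeGroup (Fin n) :=
  FreeGroup.mk (x.toWord.take j)

/-- The "antiderivative" operator: `(A f)(x) = ∑_{j=1}^{|x|} f(γ_x(j-1), γ_x(j))`, summing
an edge function along the geodesic from `e` to `x`. -/
def geodesicSum {n : ℕ} (f : FreeGroup (Fin n) × FreeGroup (Fin n) → ℂ)
    (x : FreeGroup (Fin n)) : ℂ :=
  ∑ j ∈ Finset.range x.toWord.length, f (geodesicAt x j, geodesicAt x (j + 1))

/-- The antisymmetric indicator `E_{(x,s)}` of the oriented edge from `x` to `s`. -/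
def edgeIndicator {n : ℕ} (x s : FreeGroup (Fin n)) :
    FreeGroup (Fin n) × FreeGroup (Fin n) → ℂ :=
  fun yt => if yt = (x, s) then 1 else if yt = (s, x) then -1 else 0

namespace FGAux

variable {n : ℕ}

/-- The no-cancellation relation on letters. -/
def Rel : (Fin n × Bool) → (Fin n × Bool) → Prop := fun a b => ¬(a.1 = b.1 ∧ a.2 = !b.2)

lemma chain'_reduce (L : List (Fin n × Bool)) : List.Chain' Rel (FreeGroup.reduce L) := by
  induction L with
  | nil => exact List.isChain_nil
  | cons a L ih =>
    rw [FreeGroup.reduce.cons]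
    rcases h : FreeGroup.reduce L with _ | ⟨b, t⟩
    · exact List.isChain_singleton _
    · rw [h] at ih
      dsimp only
      split_ifs with hc
      · exact ih.tail
      · exact List.isChain_cons_cons.2 ⟨hc, ih⟩

lemma reduce_eq_self {L : List (Fin n × Bool)} (h : List.Chain' Rel L) :
    FreeGroup.reduce L = L := by
  induction L with
  | nil => rfl
  | cons a L ih =>
    have hL := ih h.tail
    rw [FreeGroup.reduce.cons, hL]
    cases L with
    | nil => rfl
    | cons b t =>
      have hab : Rel a b := (List.isChain_cons_cons.1 h).1
      simp only [Rel] at hab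
      simp [hab]

lemma chain'_toWord (x : FreeGroup (Fin n)) : List.Chain' Rel x.toWord := by
  rw [← FreeGroup.reduce_toWord]; exact chain'_reduce _

lemma toWord_mk_of_chain' {L : List (Fin n × Bool)} (h : List.Chain' Rel L) :
    (FreeGroup.mk L).toWord = L := by
  rw [FreeGroup.toWord_mk, reduce_eq_self h]

lemma toWord_geodesicAt (x : FreeGroup (Fin n)) (j : ℕ) :
    (geodesicAt x j).toWord = x.toWord.take j :=
  toWord_mk_of_chain' ((chain'_toWord x).take j)

/-- The generator `aᵢ` or its inverse, according to the sign bit. -/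
def genB (i : Fin n) (b : Bool) : FreeGroup (Fin n) := FreeGroup.mk [(i, b)]

lemma genB_true (i : Fin n) : genB i true = FreeGroup.of i := rfl

lemma genB_false (i : Fin n) : genB i false = (FreeGroup.of i)⁻¹ := by
  rw [FreeGroup.of, FreeGroup.inv_mk]; rfl

lemma toWord_genB (i : Fin n) (b : Bool) : (genB i b).toWord = [(i, b)] :=
  toWord_mk_of_chain' (List.isChain_singleton _)

lemma genB_mul_cancel (i : Fin n) (b : Bool) : genB i b * genB i (!b) = 1 := by
  rw [genB, genB, FreeGroup.mul_mk]
  have h1 : FreeGroup.reduce [(i, b), (i, !b)] = [] := by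
    rw [FreeGroup.reduce.cons, FreeGroup.reduce_singleton]
    simp
  show FreeGroup.mk [(i, b), (i, !b)] = 1
  rw [← FreeGroup.reduce.self (L := [(i, b), (i, !b)]), h1, FreeGroup.one_eq_mk]

lemma genB_injective : Function.Injective (fun k : Fin n × Bool => genB k.1 k.2) := by
  rintro ⟨i, b⟩ ⟨j, c⟩ h
  have h2 := congrArg FreeGroup.toWord h
  simp only [toWord_genB] at h2
  simpa using h2

lemma reduce_append_single {L : List (Fin n × Bool)} (h : List.Chain' Rel L)
    (l : Fin n × Bool) :
    FreeGroup.reduce (L ++ [l]) =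
      if L.getLast? = some (l.1, !l.2) then L.dropLast else L ++ [l] := by
  split_ifs with hl
  · have hL : L.dropLast ++ [(l.1, !l.2)] = L :=
      List.dropLast_append_getLast? _ hl
    obtain ⟨li, lb⟩ := l
    have step : FreeGroup.Red.Step (L ++ [(li, lb)]) (L.dropLast ++ []) := by
      conv_lhs => rw [← hL, List.append_assoc]
      have h2 : (([((li, lb).1, !(li, lb).2)] ++ [(li, lb)]) : List (Fin n × Bool))
          = (li, !lb) :: (li, !(!lb)) :: [] := by simp
      rw [h2]
      exact FreeGroup.Red.Step.not
    rw [FreeGroup.reduce.Step.eq step, List.append_nil,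
      reduce_eq_self (h.prefix (List.dropLast_prefix L))]
  · apply reduce_eq_self
    apply List.isChain_append.2
    refine ⟨h, List.isChain_singleton _, ?_⟩
    intro a ha b hb
    simp only [List.head?_cons, Option.mem_def, Option.some.injEq] at hb
    intro hcon
    apply hl
    rw [Option.mem_def] at ha
    rw [ha]
    rw [← hb] at hcon
    exact congrArg some (Prod.ext_iff.mpr ⟨hcon.1, hcon.2⟩)

lemma toWord_mul_genB (x : FreeGroup (Fin n)) (i : Fin n) (b : Bool) :
    (x * genB i b).toWord =
      if x.toWord.getLast? = some (i, !b) then x.toWord.dropLast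
      else x.toWord ++ [(i, b)] := by
  conv_lhs => rw [← FreeGroup.mk_toWord (x := x)]
  rw [genB, FreeGroup.mul_mk, FreeGroup.toWord_mk,
    reduce_append_single (chain'_toWord x) (i, b)]

lemma geodesicSum_mul_genB (f : FreeGroup (Fin n) × FreeGroup (Fin n) → ℂ)
    (hanti : ∀ a b : FreeGroup (Fin n), f (a, b) = - f (b, a))
    (x : FreeGroup (Fin n)) (i : Fin n) (b : Bool) :
    geodesicSum f (x * genB i b) - geodesicSum f x = f (x, x * genB i b) := by
  set y := x * genB i b with hy_def
  by_cases hl : x.toWord.getLast? = some (i, !b)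
  · -- cancellation: the word of `y` is `x`'s word minus its last letter
    have hy : y.toWord = x.toWord.dropLast := by
      rw [hy_def, toWord_mul_genB, if_pos hl]
    have hne : x.toWord ≠ [] := by
      intro h; rw [h] at hl; simp at hl
    have hpos : 0 < x.toWord.length := List.length_pos_iff.2 hne
    have hylen : y.toWord.length = x.toWord.length - 1 := by
      rw [hy, List.length_dropLast]
    have hge : ∀ j, j ≤ y.toWord.length → geodesicAt y j = geodesicAt x j := by
      intro j hj
      unfold geodesicAt
      rw [hy, List.dropLast_eq_take, List.take_take,
        min_eq_left (by omega : j ≤ x.toWord.length - 1)]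
    have hgm : geodesicAt x y.toWord.length = y := by
      unfold geodesicAt
      rw [show y.toWord.length = x.toWord.length - 1 from hylen,
        ← List.dropLast_eq_take, ← hy, FreeGroup.mk_toWord]
    have hgm1 : geodesicAt x (y.toWord.length + 1) = x := by
      unfold geodesicAt
      rw [List.take_of_length_le (by omega), FreeGroup.mk_toWord]
    have hm' : x.toWord.length = y.toWord.length + 1 := by omega
    have hsum : geodesicSum f x = geodesicSum f y + f (y, x) := by
      unfold geodesicSum
      rw [hm', Finset.sum_range_succ, hgm, hgm1]
      congr 1
      apply Finset.sum_congr rfl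
      intro j hj
      simp only [Finset.mem_range] at hj
      rw [hge j (by omega), hge (j + 1) (by omega)]
    rw [hsum, hanti x y]
    ring
  · have hy : y.toWord = x.toWord ++ [(i, b)] := by
      rw [hy_def, toWord_mul_genB, if_neg hl]
    have hlen : y.toWord.length = x.toWord.length + 1 := by rw [hy]; simp
    have hge : ∀ j, j ≤ x.toWord.length → geodesicAt y j = geodesicAt x j := by
      intro j hj
      unfold geodesicAt
      rw [hy, List.take_append_of_le_length hj]
    have hgm : geodesicAt y x.toWord.length = x := by
      rw [hge _ le_rfl]
      unfold geodesicAt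
      rw [List.take_of_length_le le_rfl, FreeGroup.mk_toWord]
    have hgm1 : geodesicAt y (x.toWord.length + 1) = y := by
      unfold geodesicAt
      rw [List.take_of_length_le (by omega), FreeGroup.mk_toWord]
    unfold geodesicSum
    rw [hlen, Finset.sum_range_succ, hgm, hgm1]
    have hcong : ∀ j ∈ Finset.range x.toWord.length,
        f (geodesicAt y j, geodesicAt y (j + 1)) = f (geodesicAt x j, geodesicAt x (j + 1)) := by
      intro j hj
      simp only [Finset.mem_range] at hj
      rw [hge j (by omega), hge (j + 1) (by omega)]
    rw [Finset.sum_congr rfl hcong]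
    ring

lemma norm_edgeIndicator_le (x s : FreeGroup (Fin n)) (p) :
    ‖edgeIndicator x s p‖ ≤ 1 := by
  unfold edgeIndicator
  split_ifs <;> simp

lemma geodesicSum_edgeIndicator_le (x s y : FreeGroup (Fin n)) :
    ‖geodesicSum (edgeIndicator x s) y‖ ≤ 2 := by
  classical
  unfold geodesicSum
  have key : ∀ j ∈ Finset.range y.toWord.length,
      edgeIndicator x s (geodesicAt y j, geodesicAt y (j + 1)) ≠ 0 →
      (j = x.toWord.length ∨ j = s.toWord.length) := by
    intro j hj hne
    simp only [Finset.mem_range] at hj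
    unfold edgeIndicator at hne
    have hfirst : geodesicAt y j = x ∨ geodesicAt y j = s := by
      split_ifs at hne with h1 h2
      · exact Or.inl (congrArg Prod.fst h1)
      · exact Or.inr (congrArg Prod.fst h2)
      · exact absurd rfl hne
    have hlen : (geodesicAt y j).toWord.length = j := by
      rw [toWord_geodesicAt, List.length_take]
      omega
    rcases hfirst with h | h <;> rw [h] at hlen
    · exact Or.inl hlen.symm
    · exact Or.inr hlen.symm
  rw [← Finset.sum_filter_of_ne key]
  refine le_trans (norm_sum_le _ _) ?_
  calc ∑ j ∈ (Finset.range y.toWord.length).filter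
        (fun j => j = x.toWord.length ∨ j = s.toWord.length),
        ‖edgeIndicator x s (geodesicAt y j, geodesicAt y (j + 1))‖
      ≤ ∑ _j ∈ (Finset.range y.toWord.length).filter
        (fun j => j = x.toWord.length ∨ j = s.toWord.length), 1 :=
        Finset.sum_le_sum fun j _ => norm_edgeIndicator_le x s _
    _ = ((Finset.range y.toWord.length).filter
        (fun j => j = x.toWord.length ∨ j = s.toWord.length)).card := by simp
    _ ≤ ({x.toWord.length, s.toWord.length} : Finset ℕ).card := by
        apply Nat.cast_le.2
        apply Finset.card_le_card
        intro j hj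
        simp only [Finset.mem_filter] at hj
        simp [hj.2]
    _ ≤ 2 := by
        have := Finset.card_insert_le x.toWord.length ({s.toWord.length} : Finset ℕ)
        simp only [Finset.card_singleton] at this
        exact_mod_cast this

/-- The key cancellation lemma: if `f` is summable, antisymmetric, and has zero divergence
at every vertex, then `f` vanishes on the edge joining `s` to its geodesic predecessor. -/
lemma cone_vanish (f : FreeGroup (Fin n) × FreeGroup (Fin n) → ℂ)
    (hsum : Summable f)
    (hanti : ∀ a b : FreeGroup (Fin n), f (a, b) = - f (b, a))
    (hdiv : ∀ y : FreeGroup (Fin n), ∑ k : Fin n × Bool, f (y, y * genB k.1 k.2) = 0)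
    (s : FreeGroup (Fin n)) (hs : s.toWord ≠ []) :
    f (s, FreeGroup.mk s.toWord.dropLast) = 0 := by
  classical
  set w : List (Fin n × Bool) := s.toWord with hw
  set m : ℕ := w.length with hm
  have hmpos : 0 < m := List.length_pos_iff.2 hs
  set l0 : Fin n × Bool := w.getLast hs with hl0
  set x : FreeGroup (Fin n) := FreeGroup.mk w.dropLast with hx
  have hxw : x.toWord = w.dropLast :=
    toWord_mk_of_chain' ((chain'_toWord s).prefix (List.dropLast_prefix _))
  have hwlast : w.getLast? = some l0 := by
    rw [hl0, List.getLast?_eq_getLast hs]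
  -- the cone above `s`
  set T : Set (FreeGroup (Fin n)) := {y | y.toWord.take m = w} with hT
  have hsT : s ∈ T := by
    simp only [hT, Set.mem_setOf_eq, hm, hw, List.take_length]
  have hmemlen : ∀ y ∈ T, m ≤ y.toWord.length := by
    intro y hy
    have := congrArg List.length hy
    rw [List.length_take] at this
    omega
  have hxnot : x ∉ T := by
    intro hmem
    have := congrArg List.length hmem
    rw [List.length_take, hxw, List.length_dropLast] at this
    omega
  -- `s * genB l0.1 (!l0.2) = x`
  have hsx : s * genB l0.1 (!l0.2) = x := by
    apply FreeGroup.toWord_injective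
    rw [toWord_mul_genB, hxw]
    rw [if_pos (by rw [← hw, hwlast, Bool.not_not])]
  have hxs : x * genB l0.1 l0.2 = s := by
    rw [hx, genB, FreeGroup.mul_mk, List.dropLast_append_getLast? _ hwlast, hw,
      FreeGroup.mk_toWord]
  -- neighbours of cone points stay in the cone, except across the cut edge
  have key : ∀ y ∈ T, ∀ k : Fin n × Bool,
      (y * genB k.1 k.2) ∈ T ∨ (y = s ∧ k = (l0.1, !l0.2)) := by
    intro y hy k
    have hylen := hmemlen y hy
    by_cases hcan : y.toWord.getLast? = some (k.1, !k.2)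
    · by_cases hlen : m + 1 ≤ y.toWord.length
      · left
        show (y * genB k.1 k.2).toWord.take m = w
        rw [toWord_mul_genB, if_pos hcan, List.dropLast_eq_take, List.take_take,
          min_eq_left (by omega)]
        exact hy
      · -- y.toWord.length = m, so y = s and the edge is the cut edge
        have hylen' : y.toWord.length = m := by omega
        have hyw : y.toWord = w := by
          have hyT : List.take m y.toWord = w := hy
          rwa [← hylen', List.take_length] at hyT
        have hys : y = s := by
          apply FreeGroup.toWord_injective
          rw [hyw, hw]
        right
        refine ⟨hys, ?_⟩
        rw [hyw, hwlast] at hcan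
        obtain ⟨ki, kb⟩ := k
        have h1 : (((ki, kb).1, !(ki, kb).2) : Fin n × Bool) = l0 :=
          Option.some_inj.mp hcan.symm
        rw [← h1]
        simp
    · left
      show (y * genB k.1 k.2).toWord.take m = w
      rw [toWord_mul_genB, if_neg hcan, List.take_append_of_le_length hylen]
      exact hy
  -- the summable family over the cone
  let φ : T × (Fin n × Bool) → FreeGroup (Fin n) × FreeGroup (Fin n) :=
    fun q => (q.1.1, q.1.1 * genB q.2.1 q.2.2)
  have hφ : Function.Injective φ := by
    rintro ⟨⟨y, hy⟩, k⟩ ⟨⟨y', hy'⟩, k'⟩ h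
    simp only [φ, Prod.mk.injEq] at h
    obtain ⟨h1, h2⟩ := h
    subst h1
    have hk : k = k' := genB_injective (mul_left_cancel h2)
    simp [hk]
  let h : T × (Fin n × Bool) → ℂ := fun q => f (q.1.1, q.1.1 * genB q.2.1 q.2.2)
  have hsumh : Summable h := hsum.comp_injective hφ
  -- total sum is zero by the divergence condition
  have htot : ∑' q : T × (Fin n × Bool), h q = 0 := by
    rw [Summable.tsum_prod' hsumh (fun y => Summable.of_finite)]
    have : ∀ y : T, ∑' k : Fin n × Bool, h (y, k) = 0 := by
      intro y
      rw [tsum_fintype]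
      exact hdiv y.1
    rw [tsum_congr this, tsum_zero]
  -- distinguished index and involution
  set p0 : T × (Fin n × Bool) := (⟨s, hsT⟩, (l0.1, !l0.2)) with hp0
  have hhp0 : h p0 = f (s, x) := by
    simp only [h, hp0, hsx]
  have mem_of_ne : ∀ q : T × (Fin n × Bool), q ≠ p0 → (q.1.1 * genB q.2.1 q.2.2) ∈ T := by
    intro q hq
    rcases key q.1.1 q.1.2 q.2 with hmem | ⟨h1, h2⟩
    · exact hmem
    · exact absurd (Prod.ext (Subtype.ext h1) h2) hq
  let σ : T × (Fin n × Bool) → T × (Fin n × Bool) := fun q =>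
    if hq : q = p0 then p0
    else (⟨q.1.1 * genB q.2.1 q.2.2, mem_of_ne q hq⟩, (q.2.1, !q.2.2))
  have hσ_ne : ∀ q : T × (Fin n × Bool), q ≠ p0 → σ q ≠ p0 := by
    intro q hq hcon
    simp only [σ, dif_neg hq] at hcon
    have h1 : q.1.1 * genB q.2.1 q.2.2 = s := congrArg (fun z => (z.1 : FreeGroup (Fin n))) hcon
    have h2 : (q.2.1, !q.2.2) = (l0.1, !l0.2) := congrArg Prod.snd hcon
    rw [Prod.ext_iff] at h2
    have h3 : q.2.1 = l0.1 := h2.1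
    have h4 : q.2.2 = l0.2 := by
      have h5 : (!q.2.2) = (!l0.2) := h2.2
      simpa using h5
    rw [h3, h4, ← hxs] at h1
    have : q.1.1 = x := mul_right_cancel h1
    exact hxnot (this ▸ q.1.2)
  have hcancel2 : ∀ (y : FreeGroup (Fin n)) (k : Fin n × Bool),
      y * genB k.1 k.2 * genB k.1 (!k.2) = y := by
    intro y k
    rw [mul_assoc, genB_mul_cancel, mul_one]
  have hσ_inv : Function.Involutive σ := by
    intro q
    by_cases hq : q = p0
    · subst hq; simp [σ]
    · have h1 : σ q = (⟨q.1.1 * genB q.2.1 q.2.2, mem_of_ne q hq⟩, (q.2.1, !q.2.2)) := by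
        simp only [σ, dif_neg hq]
      rw [h1]
      have hne2 : ((⟨q.1.1 * genB q.2.1 q.2.2, mem_of_ne q hq⟩, (q.2.1, !q.2.2)) : T × (Fin n × Bool)) ≠ p0 := by
        rw [← h1]; exact hσ_ne q hq
      simp only [σ, dif_neg hne2]
      apply Prod.ext
      · apply Subtype.ext
        simp [hcancel2 q.1.1 q.2]
      · simp
  let g : T × (Fin n × Bool) → ℂ := fun q => if q = p0 then 0 else h q
  have hg_eval : ∀ q, g q = if q = p0 then 0 else h q := fun q => rfl
  have hg_anti : ∀ q, g (σ q) = - g q := by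
    intro q
    by_cases hq : q = p0
    · have e1 : σ q = p0 := by simp [σ, hq]
      rw [hg_eval (σ q), hg_eval q, e1, if_pos rfl, if_pos hq, neg_zero]
    · have h1 : σ q = (⟨q.1.1 * genB q.2.1 q.2.2, mem_of_ne q hq⟩, (q.2.1, !q.2.2)) := by
        simp only [σ, dif_neg hq]
      rw [hg_eval (σ q), hg_eval q, if_neg (hσ_ne q hq), if_neg hq, h1]
      show f (q.1.1 * genB q.2.1 q.2.2, q.1.1 * genB q.2.1 q.2.2 * genB q.2.1 (!q.2.2))
          = - f (q.1.1, q.1.1 * genB q.2.1 q.2.2)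
      rw [hcancel2 q.1.1 q.2, hanti]
  have hgsum : Summable g := by
    have hupd := hsumh.update p0 0
    apply hupd.congr
    intro q
    simp [Function.update_apply, hg_eval q]
  have hg0 : ∑' q, g q = 0 := by
    have e : Equiv.Perm (T × (Fin n × Bool)) := hσ_inv.toPerm σ
    have h1 : ∑' q, g q = ∑' q, g (σ q) := (Equiv.tsum_eq (hσ_inv.toPerm σ) g).symm
    have h2 : ∑' q, g (σ q) = ∑' q, - g q := tsum_congr hg_anti
    rw [tsum_neg] at h2
    have h3 : ∑' q, g q = - ∑' q, g q := h1.trans h2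
    have h4 : (2 : ℂ) * ∑' q, g q = 0 := by linear_combination h3
    simpa using h4
  have hg0' : (∑' q : ↑T × (Fin n × Bool), if q = p0 then 0 else h q) = 0 := hg0
  have hfin := Summable.tsum_eq_add_tsum_ite hsumh p0
  rw [htot, hg0', add_zero] at hfin
  rw [← hhp0]
  exact hfin.symm

end FGAux

open FGAux

/-- For the free group `F_n` with its Cayley tree: the operator `A`
defined by summing edge functions along geodesics from the identity satisfies
`δ(A f) = f` on edges (for antisymmetric `f`); `A` maps each basis edge function
`E_{(x, x aᵢ)}` into `ℓ^∞(F_n)`; and consequently `ker(∂) ∩ ℓ¹(E(F_n)) = {0}`: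
every antisymmetric, edge-supported `f ∈ ℓ¹` with
`∑ᵢ f(x, x aᵢ) - ∑ᵢ f(x aᵢ⁻¹, x) = 0` for all `x` vanishes. -/
theorem freeGroup_geodesic_antiderivative {n : ℕ} :
    (∀ f : FreeGroup (Fin n) × FreeGroup (Fin n) → ℂ,
      (∀ a b : FreeGroup (Fin n), f (a, b) = - f (b, a)) →
      ∀ (x : FreeGroup (Fin n)) (i : Fin n),
        (geodesicSum f (x * FreeGroup.of i) - geodesicSum f x
            = f (x, x * FreeGroup.of i)) ∧
        (geodesicSum f (x * (FreeGroup.of i)⁻¹) - geodesicSum f x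
            = f (x, x * (FreeGroup.of i)⁻¹))) ∧
    (∀ x : FreeGroup (Fin n), ∀ i : Fin n, ∃ C : ℝ,
      ∀ y : FreeGroup (Fin n),
        ‖geodesicSum (edgeIndicator x (x * FreeGroup.of i)) y‖ ≤ C) ∧
    (∀ f : lp (fun _ : FreeGroup (Fin n) × FreeGroup (Fin n) => ℂ) 1,
      (∀ a b : FreeGroup (Fin n), f (a, b) = - f (b, a)) →
      (∀ a b : FreeGroup (Fin n),
        (¬ ∃ i : Fin n, b = a * FreeGroup.of i ∨ a = b * FreeGroup.of i) →
        f (a, b) = 0) →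
      (∀ x : FreeGroup (Fin n),
        (∑ i : Fin n, f (x, x * FreeGroup.of i))
          - (∑ i : Fin n, f (x * (FreeGroup.of i)⁻¹, x)) = 0) →
      f = 0) := by
  refine ⟨?_, ?_, ?_⟩
  · intro f hanti x i
    constructor
    · rw [← genB_true i]
      exact geodesicSum_mul_genB f hanti x i true
    · rw [← genB_false i]
      exact geodesicSum_mul_genB f hanti x i false
  · intro x i
    exact ⟨2, fun y => geodesicSum_edgeIndicator_le x (x * FreeGroup.of i) y⟩
  · intro f hanti hsupp hdiv
    set F : FreeGroup (Fin n) × FreeGroup (Fin n) → ℂ := (f : ∀ _, ℂ) with hF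
    have hsum : Summable F := by
      have h1 := (lp.memℓp f).summable (by simp)
      apply Summable.of_norm
      simp only [ENNReal.toReal_one, Real.rpow_one] at h1
      exact h1
    have hdiv' : ∀ y : FreeGroup (Fin n),
        ∑ k : Fin n × Bool, F (y, y * genB k.1 k.2) = 0 := by
      intro y
      rw [Fintype.sum_prod_type]
      have : ∀ i : Fin n, ∑ b : Bool, F (y, y * genB i b)
          = F (y, y * FreeGroup.of i) - F (y * (FreeGroup.of i)⁻¹, y) := by
        intro i
        rw [Fintype.sum_bool, genB_true, genB_false]
        have h2 : F (y, y * (FreeGroup.of i)⁻¹) = - F (y * (FreeGroup.of i)⁻¹, y) :=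
          hanti _ _
        rw [h2]
        ring
      rw [Finset.sum_congr rfl (fun i _ => this i), Finset.sum_sub_distrib]
      exact hdiv y
    -- every positively-oriented edge value vanishes
    have hedge : ∀ (x : FreeGroup (Fin n)) (i : Fin n), F (x, x * FreeGroup.of i) = 0 := by
      intro x i
      by_cases hl : x.toWord.getLast? = some (i, !true)
      · -- x ends with (i, false): the edge goes towards the origin from x
        have hne : x.toWord ≠ [] := by intro h; rw [h] at hl; simp at hl
        have hc := cone_vanish F hsum hanti hdiv' x hne
        have hxy : FreeGroup.mk x.toWord.dropLast = x * FreeGroup.of i := by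
          apply FreeGroup.toWord_injective
          rw [toWord_mk_of_chain' ((chain'_toWord x).prefix (List.dropLast_prefix _))]
          rw [← genB_true i, toWord_mul_genB, if_pos hl]
        rwa [hxy] at hc
      · -- the edge goes away from the origin
        have hy : (x * FreeGroup.of i).toWord = x.toWord ++ [(i, true)] := by
          rw [← genB_true i, toWord_mul_genB, if_neg hl]
        have hne : (x * FreeGroup.of i).toWord ≠ [] := by rw [hy]; simp
        have hc := cone_vanish F hsum hanti hdiv' (x * FreeGroup.of i) hne
        have hxy : FreeGroup.mk (x * FreeGroup.of i).toWord.dropLast = x := by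
          rw [hy, List.dropLast_concat, FreeGroup.mk_toWord]
        rw [hxy] at hc
        rw [hanti, hc, neg_zero]
    apply lp.ext
    funext p
    obtain ⟨a, b⟩ := p
    show F (a, b) = 0
    by_cases hE : ∃ i : Fin n, b = a * FreeGroup.of i ∨ a = b * FreeGroup.of i
    · obtain ⟨i, hi | hi⟩ := hE
      · rw [hi]; exact hedge a i
      · rw [hanti, hi, hedge b i, neg_zero]
    · exact hsupp a b hE

end
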